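/- Let f : [0,1]^n → [0,1] be continuous and polynomially bounded. Then there exists an integer t0 such that for all integers t ≥ t0 and all p ∈ [0,1]^n it holds that f(p) − (1/4)·P_p[f(X̄_t) ≥ 1/2] ≥ (1/8)·f(p). -/

import Mathlib

open Finset

def cube (n : ℕ) : Set (Fin n → ℝ) := {p | ∀ i, 0 ≤ p i ∧ p i ≤ 1}

/-- The open face `F_{A,S,B}` of the hypercube, where `S` is the complement of `A ∪ B`. -/
def face {n : ℕ} (A B : Finset (Fin n)) : Set (Fin n → ℝ) :=
  {p | (∀ i ∈ A, p i = 0) ∧ (∀ i ∈ B, p i = 1) ∧ ∀ i ∉ A ∪ B, 0 < p i ∧ p i < 1}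

/-- `(1-p)^A · (p(1-p))^S · p^B` for the face `F_{A,S,B}`. -/
noncomputable def facePoly {n : ℕ} (A B : Finset (Fin n)) (p : Fin n → ℝ) : ℝ :=
  (∏ i ∈ A, (1 - p i)) * (∏ i ∈ (A ∪ B)ᶜ, p i * (1 - p i)) * (∏ i ∈ B, p i)
/-- A function `f : [0,1]^n → [0,1]` is polynomially bounded. -/
def PolyBounded {n : ℕ} (f : (Fin n → ℝ) → ℝ) : Prop :=
  ∃ (m : ℕ) (c : ℝ), 0 < c ∧ ∀ A B : Finset (Fin n), Disjoint A B →
    (¬ ∀ q ∈ face A B, f q = 0) →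
    ∀ p ∈ cube n, c * facePoly A B p ^ m ≤ f p
/-- Probability weight of a realization `x` of `t` flips of the `n` coins `p`. -/
noncomputable def flipWeight {n t : ℕ} (p : Fin n → ℝ) (x : Fin t → Fin n → Bool) : ℝ :=
  ∏ s, ∏ i, if x s i then p i else 1 - p i

/-- `P_p[E]`, the probability of the event `E` for `t` i.i.d. flips of the `n` coins `p`. -/
noncomputable def coinProb {n : ℕ} (t : ℕ) (p : Fin n → ℝ)
    (E : Set (Fin t → Fin n → Bool)) : ℝ :=
  ∑ x : Fin t → Fin n → Bool, Set.indicator E (flipWeight p) x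

/-- The empirical average `X̄_t` of the coin flips `x`. -/
noncomputable def empAvg {n : ℕ} (t : ℕ) (x : Fin t → Fin n → Bool) : Fin n → ℝ :=
  fun i => (∑ s, if x s i then (1 : ℝ) else 0) / t


lemma fact_sum_prod {ι β : Type*} [Fintype ι] [DecidableEq ι] [Fintype β] (h : ι → β → ℝ) :
    ∑ y : ι → β, ∏ i, h i (y i) = ∏ i, ∑ b, h i b := by
  rw [Finset.prod_univ_sum, Fintype.piFinset_univ]

lemma fact_sum_prod_bool {ι : Type*} [Fintype ι] [DecidableEq ι] (h : ι → Bool → ℝ) :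
    ∑ y : ι → Bool, ∏ i, h i (y i) = ∏ i, (h i true + h i false) := by
  rw [fact_sum_prod]
  exact Finset.prod_congr rfl (fun i _ => Fintype.sum_bool _)

def cnt {t : ℕ} (y : Fin t → Bool) : ℕ := (Finset.univ.filter (fun s => y s = true)).card

noncomputable def oneWeight (t : ℕ) (q : ℝ) (y : Fin t → Bool) : ℝ :=
  ∏ s, if y s then q else 1 - q

noncomputable def ocp (t : ℕ) (q : ℝ) (E : Set (Fin t → Bool)) : ℝ :=
  ∑ y : Fin t → Bool, Set.indicator E (oneWeight t q) y

variable {t : ℕ} {q : ℝ}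

lemma cnt_le (y : Fin t → Bool) : cnt y ≤ t := by
  simpa [cnt] using Finset.card_filter_le Finset.univ (fun s => y s = true)

lemma oneWeight_nonneg (hq0 : 0 ≤ q) (hq1 : q ≤ 1) (y : Fin t → Bool) : 0 ≤ oneWeight t q y :=
  Finset.prod_nonneg fun s _ => by split <;> linarith

lemma oneWeight_eq (y : Fin t → Bool) :
    oneWeight t q y = q ^ (cnt y) * (1 - q) ^ (t - cnt y) := by
  rw [oneWeight, Finset.prod_ite]
  rw [Finset.prod_const, Finset.prod_const]
  have hc : #(filter (fun x => ¬y x = true) univ) = t - cnt y := by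
    have := Finset.card_filter_add_card_filter_not (s := (Finset.univ : Finset (Fin t)))
      (p := fun s => y s = true)
    simp only [Finset.card_univ, Fintype.card_fin] at this
    unfold cnt
    omega
  rw [hc]
  rfl

lemma sum_oneWeight (t : ℕ) (q : ℝ) : ∑ y : Fin t → Bool, oneWeight t q y = 1 := by
  unfold oneWeight
  rw [fact_sum_prod_bool (fun s b => if b then q else 1 - q)]
  simp

lemma ocp_nonneg (hq0 : 0 ≤ q) (hq1 : q ≤ 1) (E : Set (Fin t → Bool)) : 0 ≤ ocp t q E :=
  Finset.sum_nonneg fun y _ => Set.indicator_nonneg (fun y _ => oneWeight_nonneg hq0 hq1 y) y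

lemma ocp_mono (hq0 : 0 ≤ q) (hq1 : q ≤ 1) {E F : Set (Fin t → Bool)} (h : E ⊆ F) :
    ocp t q E ≤ ocp t q F :=
  Finset.sum_le_sum fun y _ =>
    Set.indicator_le_indicator_of_subset h (fun y => oneWeight_nonneg hq0 hq1 y) y

lemma ocp_le_one (hq0 : 0 ≤ q) (hq1 : q ≤ 1) (E : Set (Fin t → Bool)) : ocp t q E ≤ 1 := by
  rw [← sum_oneWeight t q]
  exact Finset.sum_le_sum fun y _ => Set.indicator_le_self' (fun y _ => oneWeight_nonneg hq0 hq1 y) y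

/-- centered single-flip value -/
noncomputable def cQ (q : ℝ) (b : Bool) : ℝ := (if b then (1:ℝ) else 0) - q

lemma cnt_cast_eq (y : Fin t → Bool) : ((cnt y : ℝ)) = ∑ s, (if y s then (1:ℝ) else 0) := by
  rw [Finset.sum_boole]
  rfl

lemma centered_sum (y : Fin t → Bool) : (cnt y : ℝ) - q * t = ∑ s, cQ q (y s) := by
  unfold cQ
  rw [Finset.sum_sub_distrib, Finset.sum_const, ← cnt_cast_eq]
  simp [mul_comm]

lemma pair_term_eq (s s' : Fin t) (hss : s ≠ s') :
    ∑ y : Fin t → Bool, oneWeight t q y * (cQ q (y s) * cQ q (y s')) = 0 := by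
  have key : ∀ y : Fin t → Bool, oneWeight t q y * (cQ q (y s) * cQ q (y s'))
      = ∏ σ, ((if y σ then q else 1 - q) *
          (if σ = s then cQ q (y σ) else if σ = s' then cQ q (y σ) else 1)) := by
    intro y
    rw [Finset.prod_mul_distrib]
    unfold oneWeight
    congr 1
    have h2 : ∏ σ, (if σ = s then cQ q (y σ) else if σ = s' then cQ q (y σ) else 1)
        = ∏ σ ∈ ({s, s'} : Finset (Fin t)), (if σ = s then cQ q (y σ) else if σ = s' then cQ q (y σ) else 1) := by
      refine (Finset.prod_subset (Finset.subset_univ _) ?_).symm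
      intro x _ hx
      simp only [Finset.mem_insert, Finset.mem_singleton, not_or] at hx
      simp [hx.1, hx.2]
    rw [h2, Finset.prod_pair hss]
    simp [hss.symm]
  calc ∑ y : Fin t → Bool, oneWeight t q y * (cQ q (y s) * cQ q (y s'))
      = ∑ y : Fin t → Bool, ∏ σ, ((if y σ then q else 1 - q) *
          (if σ = s then cQ q (y σ) else if σ = s' then cQ q (y σ) else 1)) :=
        Finset.sum_congr rfl fun y _ => key y
    _ = ∏ σ, ((if (true:Bool) then q else 1 - q) * (if σ = s then cQ q true else if σ = s' then cQ q true else 1)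
         + (if (false:Bool) then q else 1 - q) * (if σ = s then cQ q false else if σ = s' then cQ q false else 1)) := by
        exact fact_sum_prod_bool (fun σ b => (if b then q else 1 - q) *
          (if σ = s then cQ q b else if σ = s' then cQ q b else 1))
    _ = 0 := by
        apply Finset.prod_eq_zero (Finset.mem_univ s)
        simp [cQ]
        ring

lemma diag_term_eq (s : Fin t) :
    ∑ y : Fin t → Bool, oneWeight t q y * (cQ q (y s) * cQ q (y s)) = q * (1 - q) := by
  have key : ∀ y : Fin t → Bool, oneWeight t q y * (cQ q (y s) * cQ q (y s))
      = ∏ σ, ((if y σ then q else 1 - q) * (if σ = s then cQ q (y σ) * cQ q (y σ) else 1)) := by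
    intro y
    rw [Finset.prod_mul_distrib]
    unfold oneWeight
    congr 1
    rw [Finset.prod_ite_eq' Finset.univ s (fun σ => cQ q (y σ) * cQ q (y σ))]
    simp
  calc ∑ y : Fin t → Bool, oneWeight t q y * (cQ q (y s) * cQ q (y s))
      = ∑ y : Fin t → Bool, ∏ σ, ((if y σ then q else 1 - q) * (if σ = s then cQ q (y σ) * cQ q (y σ) else 1)) :=
        Finset.sum_congr rfl fun y _ => key y
    _ = ∏ σ, ((if (true:Bool) then q else 1 - q) * (if σ = s then cQ q true * cQ q true else 1)
         + (if (false:Bool) then q else 1 - q) * (if σ = s then cQ q false * cQ q false else 1)) :=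
        fact_sum_prod_bool (fun σ b => (if b then q else 1 - q) *
          (if σ = s then cQ q b * cQ q b else 1))
    _ = q * (1 - q) := by
        rw [Finset.prod_congr rfl (g := fun σ => if σ = s then q * (1-q) else 1) (fun σ _ => by
          by_cases h : σ = s <;> simp [h, cQ] <;> ring)]
        rw [Finset.prod_ite_eq' Finset.univ s (fun _ => q * (1-q))]
        simp

lemma var_id (t : ℕ) (q : ℝ) :
    ∑ y : Fin t → Bool, oneWeight t q y * ((cnt y : ℝ) - q * t)^2 = t * (q * (1 - q)) := by
  have expand : ∀ y : Fin t → Bool, oneWeight t q y * ((cnt y : ℝ) - q * t)^2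
      = ∑ s, ∑ s', oneWeight t q y * (cQ q (y s) * cQ q (y s')) := by
    intro y
    rw [centered_sum, sq, Finset.sum_mul_sum]
    rw [Finset.mul_sum]
    exact Finset.sum_congr rfl fun s _ => by rw [Finset.mul_sum]
  rw [Finset.sum_congr rfl fun y _ => expand y]
  rw [Finset.sum_comm]
  have : ∀ s : Fin t, ∑ y : Fin t → Bool, ∑ s', oneWeight t q y * (cQ q (y s) * cQ q (y s'))
      = q * (1 - q) := by
    intro s
    rw [Finset.sum_comm]
    rw [Finset.sum_eq_single s (fun s' _ hs' => pair_term_eq s s' (Ne.symm hs'))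
      (fun h => absurd (Finset.mem_univ s) h)]
    exact diag_term_eq s
  rw [Finset.sum_congr rfl fun s _ => this s]
  rw [Finset.sum_const]
  simp [mul_comm]

lemma ocp_cheby (hq0 : 0 ≤ q) (hq1 : q ≤ 1) {η : ℝ} (hη : 0 < η) (ht : 1 ≤ t) :
    ocp t q {y | η ≤ |(cnt y : ℝ) / t - q|} ≤ 1 / (4 * η^2 * t) := by
  have ht0 : (0:ℝ) < t := by exact_mod_cast ht
  have key : ∀ y : Fin t → Bool, Set.indicator {y | η ≤ |(cnt y : ℝ) / t - q|} (oneWeight t q) y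
      ≤ oneWeight t q y * ((cnt y : ℝ) - q * t)^2 / (η^2 * t^2) := by
    intro y
    have hw := oneWeight_nonneg hq0 hq1 y
    rw [Set.indicator_apply]
    split
    · rename_i hy
      simp only [Set.mem_setOf_eq] at hy
      have h1 : η * t ≤ |(cnt y : ℝ) - q * t| := by
        have := abs_sub_abs_le_abs_sub ((cnt y : ℝ)/t) q
        have h2 : |(cnt y : ℝ)/t - q| * t ≤ |(cnt y : ℝ) - q * t| := by
          rw [← abs_of_pos ht0, ← abs_mul]
          apply le_of_eq
          congr 1
          rw [abs_of_pos ht0, sub_mul, div_mul_cancel₀ _ (ne_of_gt ht0)]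
        nlinarith [abs_nonneg ((cnt y : ℝ)/t - q)]
      have h2 : (η * t)^2 ≤ ((cnt y : ℝ) - q * t)^2 := by
        rw [← sq_abs ((cnt y : ℝ) - q * t)]
        apply pow_le_pow_left₀ (by positivity) h1
      have hd : (0:ℝ) < η^2 * t^2 := by positivity
      rw [le_div_iff₀ hd]
      calc oneWeight t q y * (η ^ 2 * (t:ℝ) ^ 2) = oneWeight t q y * (η*t)^2 := by ring
        _ ≤ oneWeight t q y * ((cnt y:ℝ) - q*t)^2 := mul_le_mul_of_nonneg_left h2 hw
    · exact div_nonneg (mul_nonneg hw (sq_nonneg _)) (by positivity)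
  calc ocp t q _ ≤ ∑ y : Fin t → Bool, oneWeight t q y * ((cnt y : ℝ) - q * t)^2 / (η^2 * t^2) :=
        Finset.sum_le_sum fun y _ => key y
    _ = (t * (q * (1-q))) / (η^2 * t^2) := by
        rw [← Finset.sum_div, var_id]
    _ ≤ (t * (1/4)) / (η^2 * t^2) := by
        apply div_le_div_of_nonneg_right _ (by positivity)
        apply mul_le_mul_of_nonneg_left _ (le_of_lt ht0)
        nlinarith [sq_nonneg (q - 1/2)]
    _ = 1 / (4 * η^2 * t) := by
        field_simp

lemma pow_nat_le_rpow {r : ℝ} (hr0 : 0 ≤ r) (hr1 : r ≤ 1) {k : ℕ} {a : ℝ}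
    (ha : 0 < a) (hak : a ≤ k) : r ^ k ≤ r ^ a := by
  rcases eq_or_lt_of_le hr0 with h | h
  · have hk : k ≠ 0 := by
      intro hk0
      rw [hk0] at hak
      simp at hak
      linarith
    rw [← h, zero_pow hk, Real.zero_rpow (ne_of_gt ha)]
  · rw [← Real.rpow_natCast r k]
    exact Real.rpow_le_rpow_of_exponent_ge h hr1 hak

lemma crude_high (hq0 : 0 ≤ q) (hq1 : q ≤ 1) {a : ℝ} (ha : 0 < a) :
    ocp t q {y | a ≤ (cnt y : ℝ)} ≤ 2^t * q ^ a := by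
  have key : ∀ y : Fin t → Bool, Set.indicator {y | a ≤ (cnt y : ℝ)} (oneWeight t q) y ≤ q ^ a := by
    intro y
    rw [Set.indicator_apply]
    split
    · rename_i hy
      simp only [Set.mem_setOf_eq] at hy
      calc oneWeight t q y = q ^ (cnt y) * (1-q) ^ (t - cnt y) := oneWeight_eq y
        _ ≤ q ^ (cnt y) * 1 := by
            apply mul_le_mul_of_nonneg_left _ (pow_nonneg hq0 _)
            exact pow_le_one₀ (by linarith) (by linarith)
        _ = q ^ (cnt y) := mul_one _
        _ ≤ q ^ a := pow_nat_le_rpow hq0 hq1 ha (by exact_mod_cast hy)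
    · exact Real.rpow_nonneg hq0 a
  calc ocp t q _ ≤ ∑ _y : Fin t → Bool, q ^ a := Finset.sum_le_sum fun y _ => key y
    _ = 2^t * q ^ a := by
        rw [Finset.sum_const]
        simp [Fintype.card_fun]

lemma crude_low (hq0 : 0 ≤ q) (hq1 : q ≤ 1) {a : ℝ} (ha : 0 < a) :
    ocp t q {y | (cnt y : ℝ) ≤ t - a} ≤ 2^t * (1 - q) ^ a := by
  have key : ∀ y : Fin t → Bool, Set.indicator {y | (cnt y : ℝ) ≤ t - a} (oneWeight t q) y ≤ (1-q) ^ a := by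
    intro y
    rw [Set.indicator_apply]
    split
    · rename_i hy
      simp only [Set.mem_setOf_eq] at hy
      have hcle := cnt_le y
      have hm2 : a ≤ ((t - cnt y : ℕ) : ℝ) := by
        rw [Nat.cast_sub hcle]
        linarith
      calc oneWeight t q y = q ^ (cnt y) * (1-q) ^ (t - cnt y) := oneWeight_eq y
        _ ≤ 1 * (1-q) ^ (t - cnt y) := by
            apply mul_le_mul_of_nonneg_right _ (pow_nonneg (by linarith) _)
            exact pow_le_one₀ hq0 hq1
        _ = (1-q) ^ (t - cnt y) := one_mul _
        _ ≤ (1-q) ^ a := pow_nat_le_rpow (by linarith) (by linarith) ha hm2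
    · exact Real.rpow_nonneg (by linarith) a
  calc ocp t q _ ≤ ∑ _y : Fin t → Bool, (1-q) ^ a := Finset.sum_le_sum fun y _ => key y
    _ = 2^t * (1-q) ^ a := by
        rw [Finset.sum_const]
        simp [Fintype.card_fun]

lemma helper_crude {α q : ℝ} {m t : ℕ} (hα : 0 < α) (hα1 : α ≤ 1) (hq0 : 0 ≤ q)
    (hqκ : q ≤ 2^(-(4:ℝ)/α)) (htm : 2*m/α ≤ (t:ℝ)) (ht1 : 1 ≤ t) :
    (2:ℝ)^t * q^(α*t) ≤ 2^(-(t:ℝ)) * q^(m:ℝ) := by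
  have ht0 : (0:ℝ) < t := by exact_mod_cast ht1
  have hαt : 0 < α * t := by positivity
  rcases eq_or_lt_of_le hq0 with h | h
  · rw [← h, Real.zero_rpow (ne_of_gt hαt)]
    rw [mul_zero]
    positivity
  · have htm2 : 2*(m:ℝ) ≤ α * t := by
      rw [div_le_iff₀ hα] at htm
      linarith
    have hmαt : (m:ℝ) ≤ α * t := by
      nlinarith [(Nat.cast_nonneg m : (0:ℝ) ≤ (m:ℝ))]
    have step1 : q^(α*t) = q^(α*t - m) * q^(m:ℝ) := by
      rw [← Real.rpow_add h]
      ring_nf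
    have step2 : q^(α*t - m) ≤ (2^(-(4:ℝ)/α))^(α*t - m) := by
      apply Real.rpow_le_rpow hq0 hqκ
      linarith
    have step3 : ((2:ℝ)^(-(4:ℝ)/α))^(α*t - m) = 2^((-(4:ℝ)/α) * (α*t - m)) := by
      rw [← Real.rpow_mul (by norm_num : (0:ℝ) ≤ 2)]
    have step4 : (2:ℝ)^((-(4:ℝ)/α) * (α*t - m)) ≤ 2^(-(2:ℝ)*t) := by
      apply Real.rpow_le_rpow_of_exponent_le (by norm_num)
      have expand : (-(4:ℝ)/α) * (α*t - m) = -(4:ℝ)*t + 4*m/α := by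
        field_simp
        ring
      rw [expand]
      have h4 : 4*(m:ℝ)/α = 2*(2*m/α) := by ring
      linarith
    have hqm : (0:ℝ) ≤ q^(m:ℝ) := Real.rpow_nonneg hq0 _
    calc (2:ℝ)^t * q^(α*t) = (2:ℝ)^(t:ℝ) * (q^(α*t - m) * q^(m:ℝ)) := by
          rw [← step1, Real.rpow_natCast]
      _ ≤ (2:ℝ)^(t:ℝ) * (2^(-(2:ℝ)*t) * q^(m:ℝ)) := by
          apply mul_le_mul_of_nonneg_left _ (by positivity)
          apply mul_le_mul_of_nonneg_right _ hqm
          calc q^(α*t - m) ≤ (2^(-(4:ℝ)/α))^(α*t - m) := step2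
            _ = 2^((-(4:ℝ)/α) * (α*t - m)) := step3
            _ ≤ 2^(-(2:ℝ)*t) := step4
      _ = 2^(-(t:ℝ)) * q^(m:ℝ) := by
          rw [← mul_assoc, ← Real.rpow_add (by norm_num : (0:ℝ) < 2)]
          ring_nf

noncomputable def kap (η : ℝ) : ℝ := 2^(-(4:ℝ)/η)
noncomputable def Lam (η : ℝ) (m : ℕ) : ℝ := (4 / kap η)^m

lemma kap_pos {η : ℝ} (hη : 0 < η) : 0 < kap η := Real.rpow_pos_of_pos (by norm_num) _

lemma kap_le_half {η : ℝ} (hη : 0 < η) (hη8 : η ≤ 1/8) : kap η ≤ 1/2 := by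
  have h1 : -(4:ℝ)/η ≤ -1 := by
    rw [div_le_iff₀ hη]
    nlinarith
  calc kap η ≤ 2^(-1:ℝ) := Real.rpow_le_rpow_of_exponent_le one_le_two h1
    _ = 1/2 := by
        rw [show (-1:ℝ) = ((-1:ℤ):ℝ) by norm_num, Real.rpow_intCast]
        norm_num

lemma kap_le_mirror {η : ℝ} (hη : 0 < η) (hη8 : η ≤ 1/8) : kap η ≤ 2^(-(4:ℝ)/(1-η)) := by
  apply Real.rpow_le_rpow_of_exponent_le one_le_two
  rw [show -(4:ℝ)/η = -(4/η) by ring, show -(4:ℝ)/(1-η) = -(4/(1-η)) by ring, neg_le_neg_iff]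
  exact div_le_div_of_nonneg_left (by norm_num) hη (by linarith)

lemma one_le_Lam {η : ℝ} (hη : 0 < η) (hη8 : η ≤ 1/8) {m : ℕ} : 1 ≤ Lam η m := by
  apply one_le_pow₀
  rw [le_div_iff₀ (kap_pos hη)]
  linarith [kap_le_half hη hη8]

lemma htm_mirror {η : ℝ} (hη : 0 < η) (hη8 : η ≤ 1/8) {m t : ℕ} (htm : 2*m/η ≤ (t:ℝ)) :
    2*m/(1-η) ≤ (t:ℝ) := by
  refine le_trans ?_ htm
  apply div_le_div_of_nonneg_left (by positivity) hη (by linarith)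

lemma hi_sub {t : ℕ} {η : ℝ} (ht0 : (0:ℝ) < t) :
    {y : Fin t → Bool | 1 - η ≤ (cnt y:ℝ)/t} ⊆ {y | (1-η)*t ≤ (cnt y:ℝ)} := by
  intro y hy
  simp only [Set.mem_setOf_eq] at *
  rw [← le_div_iff₀ ht0] at *
  exact hy

lemma lo_sub {t : ℕ} {η : ℝ} (ht0 : (0:ℝ) < t) :
    {y : Fin t → Bool | (cnt y:ℝ)/t ≤ η} ⊆ {y | (cnt y:ℝ) ≤ (t:ℝ) - (1-η)*t} := by
  intro y hy
  simp only [Set.mem_setOf_eq] at *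
  rw [div_le_iff₀ ht0] at hy
  nlinarith

lemma mid_sub_hi {t : ℕ} {η : ℝ} (ht0 : (0:ℝ) < t) :
    {y : Fin t → Bool | η < (cnt y:ℝ)/t ∧ (cnt y:ℝ)/t < 1-η} ⊆ {y | η*t ≤ (cnt y:ℝ)} := by
  intro y hy
  simp only [Set.mem_setOf_eq] at *
  rw [lt_div_iff₀ ht0] at hy
  linarith [hy.1]

lemma mid_sub_lo {t : ℕ} {η : ℝ} (ht0 : (0:ℝ) < t) :
    {y : Fin t → Bool | η < (cnt y:ℝ)/t ∧ (cnt y:ℝ)/t < 1-η} ⊆ {y | (cnt y:ℝ) ≤ (t:ℝ) - η*t} := by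
  intro y hy
  simp only [Set.mem_setOf_eq] at *
  rw [div_lt_iff₀ ht0] at hy
  nlinarith [hy.2]

section ClassLemmas

variable {t m : ℕ} {q η ε : ℝ}

lemma L_hi (hη : 0 < η) (hη8 : η ≤ 1/8) (hq0 : 0 ≤ q) (hq1 : q ≤ 1)
    (ht1 : 1 ≤ t) (htm : 2*m/η ≤ (t:ℝ)) :
    ocp t q {y | 1 - η ≤ (cnt y:ℝ)/t} ≤ Lam η m * q^m := by
  have ht0 : (0:ℝ) < t := by exact_mod_cast ht1
  have hqm : (0:ℝ) ≤ q^m := pow_nonneg hq0 m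
  by_cases hq : q ≤ kap η
  · calc ocp t q _ ≤ ocp t q {y | (1-η)*t ≤ (cnt y:ℝ)} := ocp_mono hq0 hq1 (hi_sub ht0)
      _ ≤ 2^t * q^((1-η)*t) := crude_high hq0 hq1 (by nlinarith)
      _ ≤ 2^(-(t:ℝ)) * q^((m:ℕ):ℝ) :=
          helper_crude (by linarith) (by linarith) hq0 (le_trans hq (kap_le_mirror hη hη8))
            (htm_mirror hη hη8 htm) ht1
      _ ≤ 1 * q^m := by
          rw [Real.rpow_natCast]
          apply mul_le_mul_of_nonneg_right _ hqm
          exact Real.rpow_le_one_of_one_le_of_nonpos one_le_two (by linarith)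
      _ ≤ Lam η m * q^m := mul_le_mul_of_nonneg_right (one_le_Lam hη hη8) hqm
  · push_neg at hq
    calc ocp t q _ ≤ 1 := ocp_le_one hq0 hq1 _
      _ = (1:ℝ)^m := (one_pow m).symm
      _ ≤ (4 / kap η * q)^m := by
          apply pow_le_pow_left₀ (by norm_num)
          rw [div_mul_eq_mul_div, le_div_iff₀ (kap_pos hη)]
          nlinarith [kap_pos hη]
      _ = Lam η m * q^m := by rw [Lam, mul_pow]

lemma L_lo (hη : 0 < η) (hη8 : η ≤ 1/8) (hq0 : 0 ≤ q) (hq1 : q ≤ 1)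
    (ht1 : 1 ≤ t) (htm : 2*m/η ≤ (t:ℝ)) :
    ocp t q {y | (cnt y:ℝ)/t ≤ η} ≤ Lam η m * (1-q)^m := by
  have ht0 : (0:ℝ) < t := by exact_mod_cast ht1
  have hqm : (0:ℝ) ≤ (1-q)^m := pow_nonneg (by linarith) m
  by_cases hq : 1 - q ≤ kap η
  · calc ocp t q _ ≤ ocp t q {y | (cnt y:ℝ) ≤ (t:ℝ) - (1-η)*t} := ocp_mono hq0 hq1 (lo_sub ht0)
      _ ≤ 2^t * (1-q)^((1-η)*t) := crude_low hq0 hq1 (by nlinarith)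
      _ ≤ 2^(-(t:ℝ)) * (1-q)^((m:ℕ):ℝ) :=
          helper_crude (by linarith) (by linarith) (by linarith)
            (le_trans hq (kap_le_mirror hη hη8)) (htm_mirror hη hη8 htm) ht1
      _ ≤ 1 * (1-q)^m := by
          rw [Real.rpow_natCast]
          apply mul_le_mul_of_nonneg_right _ hqm
          exact Real.rpow_le_one_of_one_le_of_nonpos one_le_two (by linarith)
      _ ≤ Lam η m * (1-q)^m := mul_le_mul_of_nonneg_right (one_le_Lam hη hη8) hqm
  · push_neg at hq
    calc ocp t q _ ≤ 1 := ocp_le_one hq0 hq1 _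
      _ = (1:ℝ)^m := (one_pow m).symm
      _ ≤ (4 / kap η * (1-q))^m := by
          apply pow_le_pow_left₀ (by norm_num)
          rw [div_mul_eq_mul_div, le_div_iff₀ (kap_pos hη)]
          nlinarith [kap_pos hη]
      _ = Lam η m * (1-q)^m := by rw [Lam, mul_pow]

lemma L_mid (hη : 0 < η) (hη8 : η ≤ 1/8) (hq0 : 0 ≤ q) (hq1 : q ≤ 1)
    (ht1 : 1 ≤ t) (htm : 2*m/η ≤ (t:ℝ)) :
    ocp t q {y | η < (cnt y:ℝ)/t ∧ (cnt y:ℝ)/t < 1-η} ≤ Lam η m * (q*(1-q))^m := by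
  have ht0 : (0:ℝ) < t := by exact_mod_cast ht1
  have hκh := kap_le_half hη hη8
  have hκ0 := kap_pos hη
  by_cases hq : q ≤ kap η
  · -- q small
    have h1qm : ((1:ℝ)/2)^m ≤ (1-q)^m := pow_le_pow_left₀ (by norm_num) (by linarith) m
    calc ocp t q _ ≤ ocp t q {y | η*t ≤ (cnt y:ℝ)} := ocp_mono hq0 hq1 (mid_sub_hi ht0)
      _ ≤ 2^t * q^(η*t) := crude_high hq0 hq1 (by nlinarith)
      _ ≤ 2^(-(t:ℝ)) * q^((m:ℕ):ℝ) := helper_crude hη (by linarith) hq0 hq htm ht1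
      _ ≤ 1 * q^m := by
          rw [Real.rpow_natCast]
          exact mul_le_mul_of_nonneg_right
            (Real.rpow_le_one_of_one_le_of_nonpos one_le_two (by linarith)) (pow_nonneg hq0 m)
      _ ≤ (Lam η m * (1/2)^m) * q^m := by
          apply mul_le_mul_of_nonneg_right _ (pow_nonneg hq0 m)
          rw [Lam, ← mul_pow]
          apply one_le_pow₀
          rw [div_mul_eq_mul_div, le_div_iff₀ hκ0]
          linarith
      _ ≤ (Lam η m * (1-q)^m) * q^m := by
          apply mul_le_mul_of_nonneg_right _ (pow_nonneg hq0 m)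
          exact mul_le_mul_of_nonneg_left h1qm (le_trans zero_le_one (one_le_Lam hη hη8))
      _ = Lam η m * (q*(1-q))^m := by rw [mul_pow]; ring
  · by_cases hq' : 1 - q ≤ kap η
    · -- q near 1
      have h1qm : ((1:ℝ)/2)^m ≤ q^m := pow_le_pow_left₀ (by norm_num) (by linarith) m
      calc ocp t q _ ≤ ocp t q {y | (cnt y:ℝ) ≤ (t:ℝ) - η*t} := ocp_mono hq0 hq1 (mid_sub_lo ht0)
        _ ≤ 2^t * (1-q)^(η*t) := crude_low hq0 hq1 (by nlinarith)
        _ ≤ 2^(-(t:ℝ)) * (1-q)^((m:ℕ):ℝ) :=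
            helper_crude hη (by linarith) (by linarith) hq' htm ht1
        _ ≤ 1 * (1-q)^m := by
            rw [Real.rpow_natCast]
            exact mul_le_mul_of_nonneg_right
              (Real.rpow_le_one_of_one_le_of_nonpos one_le_two (by linarith))
              (pow_nonneg (by linarith) m)
        _ ≤ (Lam η m * (1/2)^m) * (1-q)^m := by
            apply mul_le_mul_of_nonneg_right _ (pow_nonneg (by linarith) m)
            rw [Lam, ← mul_pow]
            apply one_le_pow₀
            rw [div_mul_eq_mul_div, le_div_iff₀ hκ0]
            linarith
        _ ≤ (Lam η m * q^m) * (1-q)^m := by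
            apply mul_le_mul_of_nonneg_right _ (pow_nonneg (by linarith) m)
            exact mul_le_mul_of_nonneg_left h1qm (le_trans zero_le_one (one_le_Lam hη hη8))
        _ = Lam η m * (q*(1-q))^m := by rw [mul_pow]; ring
    · -- middle
      push_neg at hq hq'
      have hmid : kap η / 2 ≤ q * (1-q) := by
        rcases le_total q (1/2) with h | h
        · nlinarith
        · nlinarith
      calc ocp t q _ ≤ 1 := ocp_le_one hq0 hq1 _
        _ = (1:ℝ)^m := (one_pow m).symm
        _ ≤ (4 / kap η * (q*(1-q)))^m := by
            apply pow_le_pow_left₀ (by norm_num)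
            rw [div_mul_eq_mul_div, le_div_iff₀ hκ0]
            nlinarith
        _ = Lam η m * (q*(1-q))^m := by rw [Lam, mul_pow]

end ClassLemmas

section LBLemmas

variable {t m : ℕ} {q η ε : ℝ}

lemma LB_hi (hη : 0 < η) (hη8 : η ≤ 1/8) (hq0 : 0 ≤ q) (hq1 : q ≤ 1) (hε : 0 < ε)
    (ht1 : 1 ≤ t) (htm : 2*m/η ≤ (t:ℝ))
    (hT2 : (2:ℝ)^(-(t:ℝ)) ≤ ε * (1/2)^m)
    (hT3 : 1/(4*η^2*t) ≤ ε * (kap η/2)^m) :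
    ocp t q ({y | 1 - η ≤ (cnt y:ℝ)/t} ∩ {y | η ≤ |(cnt y:ℝ)/t - q|}) ≤ ε * q^m := by
  have ht0 : (0:ℝ) < t := by exact_mod_cast ht1
  have hκ0 := kap_pos hη
  have hqm : (0:ℝ) ≤ q^m := pow_nonneg hq0 m
  by_cases hq : q ≤ kap η
  · calc ocp t q _ ≤ ocp t q {y | (1-η)*t ≤ (cnt y:ℝ)} :=
          ocp_mono hq0 hq1 (le_trans Set.inter_subset_left (hi_sub ht0))
      _ ≤ 2^t * q^((1-η)*t) := crude_high hq0 hq1 (by nlinarith)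
      _ ≤ 2^(-(t:ℝ)) * q^((m:ℕ):ℝ) :=
          helper_crude (by linarith) (by linarith) hq0 (le_trans hq (kap_le_mirror hη hη8))
            (htm_mirror hη hη8 htm) ht1
      _ ≤ (ε * (1/2)^m) * q^m := by
          rw [Real.rpow_natCast]
          exact mul_le_mul_of_nonneg_right hT2 hqm
      _ ≤ ε * q^m := by
          apply mul_le_mul_of_nonneg_right _ hqm
          nlinarith [pow_le_one₀ (by norm_num : (0:ℝ) ≤ 1/2) (by norm_num : (1:ℝ)/2 ≤ 1) (n := m)]
  · push_neg at hq
    calc ocp t q _ ≤ ocp t q {y | η ≤ |(cnt y:ℝ)/t - q|} :=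
          ocp_mono hq0 hq1 Set.inter_subset_right
      _ ≤ 1/(4*η^2*t) := ocp_cheby hq0 hq1 hη ht1
      _ ≤ ε * (kap η/2)^m := hT3
      _ ≤ ε * q^m := by
          apply mul_le_mul_of_nonneg_left _ (le_of_lt hε)
          exact pow_le_pow_left₀ (by linarith) (by linarith) m

lemma LB_lo (hη : 0 < η) (hη8 : η ≤ 1/8) (hq0 : 0 ≤ q) (hq1 : q ≤ 1) (hε : 0 < ε)
    (ht1 : 1 ≤ t) (htm : 2*m/η ≤ (t:ℝ))
    (hT2 : (2:ℝ)^(-(t:ℝ)) ≤ ε * (1/2)^m)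
    (hT3 : 1/(4*η^2*t) ≤ ε * (kap η/2)^m) :
    ocp t q ({y | (cnt y:ℝ)/t ≤ η} ∩ {y | η ≤ |(cnt y:ℝ)/t - q|}) ≤ ε * (1-q)^m := by
  have ht0 : (0:ℝ) < t := by exact_mod_cast ht1
  have hκ0 := kap_pos hη
  have hqm : (0:ℝ) ≤ (1-q)^m := pow_nonneg (by linarith) m
  by_cases hq : 1 - q ≤ kap η
  · calc ocp t q _ ≤ ocp t q {y | (cnt y:ℝ) ≤ (t:ℝ) - (1-η)*t} :=
          ocp_mono hq0 hq1 (le_trans Set.inter_subset_left (lo_sub ht0))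
      _ ≤ 2^t * (1-q)^((1-η)*t) := crude_low hq0 hq1 (by nlinarith)
      _ ≤ 2^(-(t:ℝ)) * (1-q)^((m:ℕ):ℝ) :=
          helper_crude (by linarith) (by linarith) (by linarith)
            (le_trans hq (kap_le_mirror hη hη8)) (htm_mirror hη hη8 htm) ht1
      _ ≤ (ε * (1/2)^m) * (1-q)^m := by
          rw [Real.rpow_natCast]
          exact mul_le_mul_of_nonneg_right hT2 hqm
      _ ≤ ε * (1-q)^m := by
          apply mul_le_mul_of_nonneg_right _ hqm
          nlinarith [pow_le_one₀ (by norm_num : (0:ℝ) ≤ 1/2) (by norm_num : (1:ℝ)/2 ≤ 1) (n := m)]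
  · push_neg at hq
    calc ocp t q _ ≤ ocp t q {y | η ≤ |(cnt y:ℝ)/t - q|} :=
          ocp_mono hq0 hq1 Set.inter_subset_right
      _ ≤ 1/(4*η^2*t) := ocp_cheby hq0 hq1 hη ht1
      _ ≤ ε * (kap η/2)^m := hT3
      _ ≤ ε * (1-q)^m := by
          apply mul_le_mul_of_nonneg_left _ (le_of_lt hε)
          exact pow_le_pow_left₀ (by linarith) (by linarith) m

lemma LB_mid (hη : 0 < η) (hη8 : η ≤ 1/8) (hq0 : 0 ≤ q) (hq1 : q ≤ 1) (hε : 0 < ε)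
    (ht1 : 1 ≤ t) (htm : 2*m/η ≤ (t:ℝ))
    (hT2 : (2:ℝ)^(-(t:ℝ)) ≤ ε * (1/2)^m)
    (hT3 : 1/(4*η^2*t) ≤ ε * (kap η/2)^m) :
    ocp t q ({y | η < (cnt y:ℝ)/t ∧ (cnt y:ℝ)/t < 1-η} ∩ {y | η ≤ |(cnt y:ℝ)/t - q|})
      ≤ ε * (q*(1-q))^m := by
  have ht0 : (0:ℝ) < t := by exact_mod_cast ht1
  have hκ0 := kap_pos hη
  have hκh := kap_le_half hη hη8
  by_cases hq : q ≤ kap η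
  · have h1qm : ((1:ℝ)/2)^m ≤ (1-q)^m := pow_le_pow_left₀ (by norm_num) (by linarith) m
    calc ocp t q _ ≤ ocp t q {y | η*t ≤ (cnt y:ℝ)} :=
          ocp_mono hq0 hq1 (le_trans Set.inter_subset_left (mid_sub_hi ht0))
      _ ≤ 2^t * q^(η*t) := crude_high hq0 hq1 (by nlinarith)
      _ ≤ 2^(-(t:ℝ)) * q^((m:ℕ):ℝ) := helper_crude hη (by linarith) hq0 hq htm ht1
      _ ≤ (ε * (1/2)^m) * q^m := by
          rw [Real.rpow_natCast]
          exact mul_le_mul_of_nonneg_right hT2 (pow_nonneg hq0 m)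
      _ ≤ (ε * (1-q)^m) * q^m := by
          apply mul_le_mul_of_nonneg_right _ (pow_nonneg hq0 m)
          exact mul_le_mul_of_nonneg_left h1qm (le_of_lt hε)
      _ = ε * (q*(1-q))^m := by rw [mul_pow]; ring
  · by_cases hq' : 1 - q ≤ kap η
    · have h1qm : ((1:ℝ)/2)^m ≤ q^m := pow_le_pow_left₀ (by norm_num) (by linarith) m
      calc ocp t q _ ≤ ocp t q {y | (cnt y:ℝ) ≤ (t:ℝ) - η*t} :=
            ocp_mono hq0 hq1 (le_trans Set.inter_subset_left (mid_sub_lo ht0))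
        _ ≤ 2^t * (1-q)^(η*t) := crude_low hq0 hq1 (by nlinarith)
        _ ≤ 2^(-(t:ℝ)) * (1-q)^((m:ℕ):ℝ) :=
            helper_crude hη (by linarith) (by linarith) hq' htm ht1
        _ ≤ (ε * (1/2)^m) * (1-q)^m := by
            rw [Real.rpow_natCast]
            exact mul_le_mul_of_nonneg_right hT2 (pow_nonneg (by linarith) m)
        _ ≤ (ε * q^m) * (1-q)^m := by
            apply mul_le_mul_of_nonneg_right _ (pow_nonneg (by linarith) m)
            exact mul_le_mul_of_nonneg_left h1qm (le_of_lt hε)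
        _ = ε * (q*(1-q))^m := by rw [mul_pow]; ring
    · push_neg at hq hq'
      have hmid : kap η / 2 ≤ q * (1-q) := by
        rcases le_total q (1/2) with h | h
        · nlinarith
        · nlinarith
      calc ocp t q _ ≤ ocp t q {y | η ≤ |(cnt y:ℝ)/t - q|} :=
            ocp_mono hq0 hq1 Set.inter_subset_right
        _ ≤ 1/(4*η^2*t) := ocp_cheby hq0 hq1 hη ht1
        _ ≤ ε * (kap η/2)^m := hT3
        _ ≤ ε * (q*(1-q))^m := by
            apply mul_le_mul_of_nonneg_left _ (le_of_lt hε)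
            exact pow_le_pow_left₀ (by linarith) hmid m

end LBLemmas

section MultiCoin

variable {n t : ℕ} {p : Fin n → ℝ}

lemma flipWeight_nonneg (hp : p ∈ cube n) (x : Fin t → Fin n → Bool) : 0 ≤ flipWeight p x :=
  Finset.prod_nonneg fun s _ => Finset.prod_nonneg fun i _ => by
    have := hp i
    split <;> linarith [this.1, this.2]

lemma coinProb_nonneg (hp : p ∈ cube n) (E : Set (Fin t → Fin n → Bool)) : 0 ≤ coinProb t p E :=
  Finset.sum_nonneg fun x _ => Set.indicator_nonneg (fun x _ => flipWeight_nonneg hp x) x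

lemma coinProb_mono (hp : p ∈ cube n) {E F : Set (Fin t → Fin n → Bool)} (h : E ⊆ F) :
    coinProb t p E ≤ coinProb t p F :=
  Finset.sum_le_sum fun x _ =>
    Set.indicator_le_indicator_of_subset h (fun x => flipWeight_nonneg hp x) x

lemma coinProb_le_sum {ι : Type*} (hp : p ∈ cube n) (A : Finset ι)
    (F : ι → Set (Fin t → Fin n → Bool)) (E : Set (Fin t → Fin n → Bool))
    (h : ∀ x ∈ E, ∃ a ∈ A, x ∈ F a) :
    coinProb t p E ≤ ∑ a ∈ A, coinProb t p (F a) := by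
  have key : ∀ x : Fin t → Fin n → Bool,
      Set.indicator E (flipWeight p) x ≤ ∑ a ∈ A, Set.indicator (F a) (flipWeight p) x := by
    intro x
    classical
    rw [Set.indicator_apply]
    split
    · rename_i hx
      obtain ⟨a, ha, hxa⟩ := h x hx
      refine Finset.single_le_sum (fun a _ => Set.indicator_nonneg
        (fun x _ => flipWeight_nonneg hp x) x) ha |>.trans_eq' ?_
      rw [Set.indicator_of_mem hxa]
    · exact Finset.sum_nonneg fun a _ => Set.indicator_nonneg
        (fun x _ => flipWeight_nonneg hp x) x
  calc coinProb t p E ≤ ∑ x : Fin t → Fin n → Bool, ∑ a ∈ A, Set.indicator (F a) (flipWeight p) x :=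
        Finset.sum_le_sum fun x _ => key x
    _ = ∑ a ∈ A, coinProb t p (F a) := Finset.sum_comm

lemma coinProb_pi (hp : p ∈ cube n) (E : Fin n → Set (Fin t → Bool)) :
    coinProb t p {x | ∀ i, (fun s => x s i) ∈ E i} = ∏ i, ocp t (p i) (E i) := by
  have step1 : ∀ x : Fin t → Fin n → Bool,
      Set.indicator {x : Fin t → Fin n → Bool | ∀ i, (fun s => x s i) ∈ E i} (flipWeight p) x
      = ∏ i, Set.indicator (E i) (oneWeight t (p i)) (fun s => x s i) := by
    intro x
    by_cases h : ∀ i, (fun s => x s i) ∈ E i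
    · rw [Set.indicator_of_mem
        (show x ∈ {x : Fin t → Fin n → Bool | ∀ i, (fun s => x s i) ∈ E i} from h)]
      rw [Finset.prod_congr rfl (fun i _ => Set.indicator_of_mem (h i) (oneWeight t (p i)))]
      rw [flipWeight, Finset.prod_comm]
      rfl
    · push_neg at h
      obtain ⟨i, hi⟩ := h
      rw [Set.indicator_of_notMem (by simpa using ⟨i, hi⟩)]
      · exact (Finset.prod_eq_zero (Finset.mem_univ i)
          (Set.indicator_of_notMem hi (oneWeight t (p i)))).symm
  rw [coinProb, Finset.sum_congr rfl (fun x _ => step1 x)]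
  rw [show ∀ (g : (Fin t → Fin n → Bool) → ℝ), ∑ x : Fin t → Fin n → Bool, g x
    = ∑ z : Fin n → Fin t → Bool, g (fun s i => z i s) from fun g =>
      Fintype.sum_equiv (Equiv.piComm fun _ _ => Bool).symm _ _ (fun z => rfl)]
  exact fact_sum_prod (fun i y => Set.indicator (E i) (oneWeight t (p i)) y)

lemma coinProb_le_one (hp : p ∈ cube n) (E : Set (Fin t → Fin n → Bool)) :
    coinProb t p E ≤ 1 := by
  have h1 : coinProb t p Set.univ = 1 := by
    have := coinProb_pi (t := t) hp (fun _ => Set.univ)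
    have heq : {x : Fin t → Fin n → Bool | ∀ i, (fun s => x s i) ∈ (Set.univ : Set (Fin t → Bool))}
        = Set.univ := by
      ext x
      simp
    rw [heq] at this
    rw [this]
    calc ∏ i : Fin n, ocp t (p i) Set.univ = ∏ i : Fin n, 1 := by
          refine Finset.prod_congr rfl fun i _ => ?_
          rw [ocp]
          simp only [Set.indicator_univ]
          exact sum_oneWeight t (p i)
      _ = 1 := Finset.prod_const_one
  calc coinProb t p E ≤ coinProb t p Set.univ := coinProb_mono hp (Set.subset_univ E)
    _ = 1 := h1

end MultiCoin

section Classify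

noncomputable def classify (η r : ℝ) : Fin 3 :=
  if r ≤ η then 0 else if 1 - η ≤ r then 2 else 1

noncomputable def gg : Fin 3 → ℝ → ℝ :=
  fun v r => if v = 0 then 1 - r else if v = 2 then r else r * (1 - r)

lemma fin3_cases (v : Fin 3) : v = 0 ∨ v = 1 ∨ v = 2 := by fin_cases v <;> simp

lemma classify_eq_zero_iff {η r : ℝ} : classify η r = 0 ↔ r ≤ η := by
  unfold classify
  split_ifs <;> simp_all

lemma classify_eq_two_iff {η r : ℝ} : classify η r = 2 ↔ (¬ r ≤ η ∧ 1 - η ≤ r) := by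
  unfold classify
  split_ifs <;> simp_all

lemma classify_eq_one_iff {η r : ℝ} : classify η r = 1 ↔ (η < r ∧ r < 1 - η) := by
  unfold classify
  split_ifs <;> constructor <;> intro h <;> simp_all <;> first | linarith | rfl

variable {n : ℕ}

def Aset (σ : Fin n → Fin 3) : Finset (Fin n) := Finset.univ.filter (fun i => σ i = 0)
def Bset (σ : Fin n → Fin 3) : Finset (Fin n) := Finset.univ.filter (fun i => σ i = 2)

lemma ABdisj (σ : Fin n → Fin 3) : Disjoint (Aset σ) (Bset σ) := by
  rw [Finset.disjoint_left]
  intro i hi hi'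
  simp only [Aset, Bset, Finset.mem_filter] at hi hi'
  rw [hi.2] at hi'
  exact absurd hi'.2 (by decide)

lemma ABcompl (σ : Fin n → Fin 3) :
    (Aset σ ∪ Bset σ)ᶜ = Finset.univ.filter (fun i => σ i = 1) := by
  ext i
  simp only [Finset.mem_compl, Finset.mem_union, Aset, Bset, Finset.mem_filter,
    Finset.mem_univ, true_and]
  rcases fin3_cases (σ i) with h | h | h <;> simp [h]

lemma facePoly_gg (σ : Fin n → Fin 3) (p : Fin n → ℝ) :
    facePoly (Aset σ) (Bset σ) p = ∏ i, gg (σ i) (p i) := by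
  rw [facePoly, ABcompl]
  have h0 : ∏ i ∈ Aset σ, (1 - p i) = ∏ i ∈ Aset σ, gg (σ i) (p i) :=
    Finset.prod_congr rfl fun i hi => by
      simp only [Aset, Finset.mem_filter] at hi
      simp [gg, hi.2]
  have h1 : ∏ i ∈ Finset.univ.filter (fun i => σ i = 1), (p i * (1 - p i))
      = ∏ i ∈ Finset.univ.filter (fun i => σ i = 1), gg (σ i) (p i) :=
    Finset.prod_congr rfl fun i hi => by
      simp only [Finset.mem_filter] at hi
      simp [gg, hi.2]
  have h2 : ∏ i ∈ Bset σ, p i = ∏ i ∈ Bset σ, gg (σ i) (p i) :=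
    Finset.prod_congr rfl fun i hi => by
      simp only [Bset, Finset.mem_filter] at hi
      simp [gg, hi.2]
  rw [h0, h1, h2]
  rw [← Finset.prod_mul_prod_compl (Aset σ ∪ Bset σ) (fun i => gg (σ i) (p i)),
    Finset.prod_union (ABdisj σ), ABcompl]
  ring

end Classify

section MorePrep

variable {n t : ℕ} {p : Fin n → ℝ}

lemma facePoly_nonneg (A B : Finset (Fin n)) (hp : p ∈ cube n) : 0 ≤ facePoly A B p := by
  have h := fun i => hp i
  apply mul_nonneg (mul_nonneg ?_ ?_) ?_ <;>
    exact Finset.prod_nonneg fun i _ => by nlinarith [(h i).1, (h i).2]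

lemma facePoly_le_one (A B : Finset (Fin n)) (hp : p ∈ cube n) : facePoly A B p ≤ 1 := by
  have h := fun i => hp i
  have g1 : ∏ i ∈ A, (1 - p i) ≤ 1 :=
    Finset.prod_le_one (fun i _ => by linarith [(h i).2]) (fun i _ => by linarith [(h i).1])
  have g2 : ∏ i ∈ (A ∪ B)ᶜ, (p i * (1 - p i)) ≤ 1 :=
    Finset.prod_le_one (fun i _ => by nlinarith [(h i).1, (h i).2])
      (fun i _ => by nlinarith [(h i).1, (h i).2])
  have g3 : ∏ i ∈ B, p i ≤ 1 :=
    Finset.prod_le_one (fun i _ => (h i).1) (fun i _ => (h i).2)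
  have n2 : 0 ≤ ∏ i ∈ (A ∪ B)ᶜ, (p i * (1 - p i)) :=
    Finset.prod_nonneg fun i _ => by nlinarith [(h i).1, (h i).2]
  have n3 : 0 ≤ ∏ i ∈ B, p i := Finset.prod_nonneg fun i _ => (h i).1
  have h12 : (∏ i ∈ A, (1 - p i)) * ∏ i ∈ (A ∪ B)ᶜ, (p i * (1 - p i)) ≤ 1 :=
    mul_le_one₀ g1 n2 g2
  unfold facePoly
  exact mul_le_one₀ h12 n3 g3

lemma empAvg_eq_cnt (x : Fin t → Fin n → Bool) (i : Fin n) :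
    empAvg t x i = (cnt (fun s => x s i) : ℝ) / t := by
  unfold empAvg cnt
  rw [Finset.sum_boole]

lemma empAvg_mem_cube (ht : 1 ≤ t) (x : Fin t → Fin n → Bool) : empAvg t x ∈ cube n := by
  intro i
  rw [empAvg_eq_cnt]
  have ht0 : (0:ℝ) < t := by exact_mod_cast ht
  constructor
  · positivity
  · rw [div_le_one ht0]
    exact_mod_cast cnt_le _

noncomputable def Ev (t : ℕ) (η pp : ℝ) (v : Fin 3) (bad : Bool) : Set (Fin t → Bool) :=
  {y | classify η ((cnt y:ℝ)/t) = v ∧ (bad = true → η ≤ |(cnt y:ℝ)/t - pp|)}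

lemma Ev_bound_good {m : ℕ} {η q : ℝ} (hη : 0 < η) (hη8 : η ≤ 1/8) (hq0 : 0 ≤ q) (hq1 : q ≤ 1)
    (ht1 : 1 ≤ t) (htm : 2*m/η ≤ (t:ℝ)) (v : Fin 3) (bad : Bool) :
    ocp t q (Ev t η q v bad) ≤ Lam η m * gg v q ^ m := by
  rcases fin3_cases v with hv | hv | hv <;> subst hv
  · refine le_trans (ocp_mono hq0 hq1 ?_) (le_trans (L_lo hη hη8 hq0 hq1 ht1 htm) ?_)
    · intro y hy
      exact classify_eq_zero_iff.mp hy.1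
    · simp [gg]
  · refine le_trans (ocp_mono hq0 hq1 ?_) (le_trans (L_mid hη hη8 hq0 hq1 ht1 htm) ?_)
    · intro y hy
      exact classify_eq_one_iff.mp hy.1
    · simp [gg]
  · refine le_trans (ocp_mono hq0 hq1 ?_) (le_trans (L_hi hη hη8 hq0 hq1 ht1 htm) ?_)
    · intro y hy
      exact (classify_eq_two_iff.mp hy.1).2
    · simp [gg]

lemma Ev_bound_bad {m : ℕ} {η ε q : ℝ} (hη : 0 < η) (hη8 : η ≤ 1/8) (hq0 : 0 ≤ q) (hq1 : q ≤ 1)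
    (hε : 0 < ε) (ht1 : 1 ≤ t) (htm : 2*m/η ≤ (t:ℝ))
    (hT2 : (2:ℝ)^(-(t:ℝ)) ≤ ε * (1/2)^m)
    (hT3 : 1/(4*η^2*t) ≤ ε * (kap η/2)^m) (v : Fin 3) :
    ocp t q (Ev t η q v true) ≤ ε * gg v q ^ m := by
  rcases fin3_cases v with hv | hv | hv <;> subst hv
  · refine le_trans (ocp_mono hq0 hq1 ?_)
      (le_trans (LB_lo hη hη8 hq0 hq1 hε ht1 htm hT2 hT3) ?_)
    · intro y hy
      exact ⟨classify_eq_zero_iff.mp hy.1, hy.2 rfl⟩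
    · simp [gg]
  · refine le_trans (ocp_mono hq0 hq1 ?_)
      (le_trans (LB_mid hη hη8 hq0 hq1 hε ht1 htm hT2 hT3) ?_)
    · intro y hy
      exact ⟨classify_eq_one_iff.mp hy.1, hy.2 rfl⟩
    · simp [gg]
  · refine le_trans (ocp_mono hq0 hq1 ?_)
      (le_trans (LB_hi hη hη8 hq0 hq1 hε ht1 htm hT2 hT3) ?_)
    · intro y hy
      exact ⟨(classify_eq_two_iff.mp hy.1).2, hy.2 rfl⟩
    · simp [gg]

end MorePrep

set_option maxHeartbeats 1000000 in
theorem stmt0 {n : ℕ} (f : (Fin n → ℝ) → ℝ)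
    (hrange : ∀ p ∈ cube n, f p ∈ Set.Icc (0 : ℝ) 1)
    (hcont : ContinuousOn f (cube n))
    (hpb : PolyBounded f) :
    ∃ t0 : ℕ, ∀ t : ℕ, t0 ≤ t → ∀ p ∈ cube n,
      (1 / 8) * f p ≤
        f p - (1 / 4) * coinProb t p {x | 1 / 2 ≤ f (empAvg t x)} := by
  classical
  obtain ⟨m₀, c, hc, hbound₀⟩ := hpb
  set m := m₀ + 1 with hm
  have hbound : ∀ A B : Finset (Fin n), Disjoint A B → (¬ ∀ q ∈ face A B, f q = 0) →
      ∀ p ∈ cube n, c * facePoly A B p ^ m ≤ f p := by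
    intro A B hAB hnv p hp
    refine le_trans ?_ (hbound₀ A B hAB hnv p hp)
    have h0 := facePoly_nonneg A B hp
    have h1 := facePoly_le_one A B hp
    have h2 : facePoly A B p ^ m ≤ facePoly A B p ^ m₀ :=
      pow_le_pow_of_le_one h0 h1 (by omega)
    nlinarith
  have hcomp : IsCompact (cube n) := by
    have heq : cube n = Set.pi Set.univ (fun _ : Fin n => Set.Icc (0:ℝ) 1) := by
      ext p
      simp only [cube, Set.mem_setOf_eq, Set.mem_pi, Set.mem_univ, true_implies, Set.mem_Icc]
    rw [heq]
    exact isCompact_univ_pi fun i => isCompact_Icc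
  have huc := hcomp.uniformContinuousOn_of_continuous hcont
  rw [Metric.uniformContinuousOn_iff] at huc
  obtain ⟨δ, hδ, hδf⟩ := huc (1/8) (by norm_num)
  set η := min (δ/2) (1/8) with hηdef
  have hη : 0 < η := lt_min (by linarith) (by norm_num)
  have hη8 : η ≤ 1/8 := min_le_right _ _
  have hηδ : η < δ := lt_of_le_of_lt (min_le_left _ _) (by linarith)
  have hclose : ∀ x ∈ cube n, ∀ y ∈ cube n, (∀ i, |x i - y i| ≤ η) → |f x - f y| < 1/8 := by
    intro x hx y hy hxy
    have hd : dist x y ≤ η := by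
      rw [dist_pi_le_iff (le_of_lt hη)]
      intro i
      rw [Real.dist_eq]
      exact hxy i
    have := hδf x hx y hy (lt_of_le_of_lt hd hηδ)
    rwa [Real.dist_eq] at this
  have hκ0 := kap_pos hη
  set Λ := Lam η m with hΛdef
  have hΛ1 : 1 ≤ Λ := one_le_Lam hη hη8
  have hΛ0 : (0:ℝ) < Λ := lt_of_lt_of_le one_pos hΛ1
  set D := ((n:ℝ)+1) * 3^n * (Λ^n + 1) with hDdef
  have hD : 0 < D := by positivity
  set ε := c / D with hεdef
  have hε : 0 < ε := by positivity
  obtain ⟨t1, ht1⟩ := exists_nat_ge (2*m/η)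
  have hhalf : (0:ℝ) < ε * (1/2)^m := by positivity
  obtain ⟨t2, ht2⟩ := exists_pow_lt_of_lt_one hhalf (by norm_num : (1:ℝ)/2 < 1)
  have hR : (0:ℝ) < 4*η^2*(ε * (kap η/2)^m) := by positivity
  obtain ⟨t3, ht3⟩ := exists_nat_ge (1/(4*η^2*(ε * (kap η/2)^m)))
  refine ⟨max (max t1 t2) (max t3 1), ?_⟩
  intro t ht p hp
  have hfmem := hrange p hp
  have hfp0 : 0 ≤ f p := hfmem.1
  have ht1n : t1 ≤ t := le_trans (le_trans (le_max_left _ _) (le_max_left _ _)) ht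
  have ht2n : t2 ≤ t := le_trans (le_trans (le_max_right _ _) (le_max_left _ _)) ht
  have ht3n : t3 ≤ t := le_trans (le_trans (le_max_left _ _) (le_max_right _ _)) ht
  have htpos : 1 ≤ t := le_trans (le_trans (le_max_right _ _) (le_max_right _ _)) ht
  have ht0 : (0:ℝ) < t := by exact_mod_cast htpos
  have htm : 2*m/η ≤ (t:ℝ) := le_trans ht1 (by exact_mod_cast ht1n)
  have hT2 : (2:ℝ)^(-(t:ℝ)) ≤ ε * (1/2)^m := by
    have h2t : (2:ℝ)^(-(t:ℝ)) = (1/2)^t := by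
      rw [Real.rpow_neg (by norm_num : (0:ℝ) ≤ 2), Real.rpow_natCast, one_div, inv_pow]
    rw [h2t]
    calc ((1:ℝ)/2)^t ≤ (1/2)^t2 :=
          pow_le_pow_of_le_one (by norm_num) (by norm_num) ht2n
      _ ≤ ε * (1/2)^m := le_of_lt ht2
  have hT3 : 1/(4*η^2*(t:ℝ)) ≤ ε * (kap η/2)^m := by
    have h1 : 1/(4*η^2*(ε * (kap η/2)^m)) ≤ (t:ℝ) := le_trans ht3 (by exact_mod_cast ht3n)
    rw [div_le_iff₀ hR] at h1
    rw [div_le_iff₀ (by positivity)]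
    nlinarith
  set E := {x : Fin t → Fin n → Bool | 1/2 ≤ f (empAvg t x)} with hEdef
  by_cases hbig : 2/7 ≤ f p
  · have hP1 := coinProb_le_one hp E
    have hP0 := coinProb_nonneg hp E
    linarith
  · push_neg at hbig
    suffices hsuf : coinProb t p E ≤ (7/2) * f p by linarith
    set Good : Finset (Fin n → Fin 3) :=
      Finset.univ.filter (fun σ => ¬ ∀ r ∈ face (Aset σ) (Bset σ), f r = 0) with hGooddef
    set PE : (Fin n → Fin 3) → Fin n → Set (Fin t → Fin n → Bool) :=
      fun σ j => {x | ∀ i, (fun s => x s i) ∈ Ev t η (p i) (σ i) (decide (i = j))} with hPEdef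
    have hincl : ∀ x ∈ E, ∃ a ∈ Good ×ˢ Finset.univ, x ∈ PE a.1 a.2 := by
      intro x hx
      have hqbcube := empAvg_mem_cube htpos x
      have hfqb : 1/2 ≤ f (empAvg t x) := hx
      set qb := empAvg t x with hqbdef
      set σ : Fin n → Fin 3 := fun i => classify η (qb i) with hσdef
      have hfar : ∃ j, η < |qb j - p j| := by
        by_contra hcon
        push_neg at hcon
        have habs := hclose qb hqbcube p hp (fun i => hcon i)
        rw [abs_lt] at habs
        linarith [habs.1, habs.2]
      obtain ⟨j, hj⟩ := hfar
      have hσGood : σ ∈ Good := by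
        rw [hGooddef, Finset.mem_filter]
        refine ⟨Finset.mem_univ _, ?_⟩
        intro hall
        set q' : Fin n → ℝ := fun i => if σ i = 0 then (0:ℝ) else if σ i = 2 then 1 else qb i
          with hq'def
        have hv0 : ∀ i, σ i = 0 → q' i = 0 := fun i h => by simp [hq'def, h]
        have hv2 : ∀ i, σ i = 2 → q' i = 1 := fun i h => by simp [hq'def, h]
        have hv1 : ∀ i, σ i = 1 → q' i = qb i := fun i h => by simp [hq'def, h]
        have hq'cube : q' ∈ cube n := by
          intro i
          rcases fin3_cases (σ i) with h | h | h
          · rw [hv0 i h]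
            constructor <;> norm_num
          · rw [hv1 i h]
            have h1 := classify_eq_one_iff.mp h
            constructor <;> [linarith [h1.1]; linarith [h1.2]]
          · rw [hv2 i h]
            constructor <;> norm_num
        have hq'face : q' ∈ face (Aset σ) (Bset σ) := by
          refine ⟨?_, ?_, ?_⟩
          · intro i hi
            exact hv0 i (Finset.mem_filter.mp hi).2
          · intro i hi
            exact hv2 i (Finset.mem_filter.mp hi).2
          · intro i hi
            rw [← Finset.mem_compl, ABcompl] at hi
            have h := (Finset.mem_filter.mp hi).2
            have h1 := classify_eq_one_iff.mp h
            rw [hv1 i h]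
            constructor <;> [linarith [h1.1]; linarith [h1.2]]
        have hclose' : ∀ i, |q' i - qb i| ≤ η := by
          intro i
          rcases fin3_cases (σ i) with h | h | h
          · have h1 := classify_eq_zero_iff.mp h
            have h2 := (hqbcube i).1
            rw [hv0 i h, abs_le]
            constructor <;> linarith
          · rw [hv1 i h]
            simp only [sub_self, abs_zero]
            linarith
          · have h1 := (classify_eq_two_iff.mp h).2
            have h2 := (hqbcube i).2
            rw [hv2 i h, abs_le]
            constructor <;> linarith
        have hd := hclose q' hq'cube qb hqbcube hclose'
        rw [hall q' hq'face, abs_lt] at hd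
        linarith [hd.1, hd.2]
      refine ⟨(σ, j), Finset.mem_product.mpr ⟨hσGood, Finset.mem_univ j⟩, ?_⟩
      intro i
      constructor
      · rw [← empAvg_eq_cnt]
      · intro hd
        have hij : i = j := of_decide_eq_true hd
        subst hij
        rw [← empAvg_eq_cnt]
        exact le_of_lt hj
    have hpair : ∀ a ∈ Good ×ˢ (Finset.univ : Finset (Fin n)),
        coinProb t p (PE a.1 a.2) ≤ ε * Λ^n * (f p / c) := by
      rintro ⟨σ, j⟩ ha
      rw [Finset.mem_product] at ha
      have hσnv : ¬ ∀ r ∈ face (Aset σ) (Bset σ), f r = 0 := (Finset.mem_filter.mp ha.1).2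
      have h1 : coinProb t p (PE σ j)
          = ∏ i, ocp t (p i) (Ev t η (p i) (σ i) (decide (i = j))) := coinProb_pi hp _
      have h2 : ∏ i, ocp t (p i) (Ev t η (p i) (σ i) (decide (i = j)))
          ≤ ∏ i, ((if i = j then ε else Λ) * gg (σ i) (p i)^m) := by
        apply Finset.prod_le_prod (fun i _ => ocp_nonneg (hp i).1 (hp i).2 _)
        intro i _
        by_cases hij : i = j
        · subst hij
          rw [if_pos rfl]
          have hd : decide (i = i) = true := by simp
          rw [hd]
          exact Ev_bound_bad hη hη8 (hp i).1 (hp i).2 hε htpos htm hT2 hT3 (σ i)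
        · rw [if_neg hij]
          have hd : decide (i = j) = false := by simp [hij]
          rw [hd]
          exact Ev_bound_good hη hη8 (hp i).1 (hp i).2 htpos htm (σ i) false
      have h3 : ∏ i, ((if i = j then ε else Λ) * gg (σ i) (p i)^m)
          = (ε * Λ^(#(Finset.univ.erase j))) * facePoly (Aset σ) (Bset σ) p ^ m := by
        rw [Finset.prod_mul_distrib, Finset.prod_pow, ← facePoly_gg]
        congr 1
        rw [← Finset.mul_prod_erase Finset.univ _ (Finset.mem_univ j), if_pos rfl]
        congr 1
        rw [Finset.prod_congr rfl (fun i hi => if_neg (Finset.ne_of_mem_erase hi))]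
        exact Finset.prod_const Λ
      have h4 : facePoly (Aset σ) (Bset σ) p ^ m ≤ f p / c := by
        rw [le_div_iff₀ hc]
        linarith [hbound (Aset σ) (Bset σ) (ABdisj σ) hσnv p hp]
      have h5 : (ε * Λ^(#(Finset.univ.erase j))) ≤ ε * Λ^n := by
        apply mul_le_mul_of_nonneg_left _ (le_of_lt hε)
        apply pow_le_pow_right₀ hΛ1
        calc #(Finset.univ.erase j) ≤ #(Finset.univ : Finset (Fin n)) :=
              Finset.card_le_card (Finset.erase_subset _ _)
          _ = n := by simp
      have hfpm0 : 0 ≤ facePoly (Aset σ) (Bset σ) p ^ m :=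
        pow_nonneg (facePoly_nonneg _ _ hp) m
      calc coinProb t p (PE σ j)
          = ∏ i, ocp t (p i) (Ev t η (p i) (σ i) (decide (i = j))) := h1
        _ ≤ ∏ i, ((if i = j then ε else Λ) * gg (σ i) (p i)^m) := h2
        _ = (ε * Λ^(#(Finset.univ.erase j))) * facePoly (Aset σ) (Bset σ) p ^ m := h3
        _ ≤ (ε * Λ^n) * (f p / c) := by
            apply mul_le_mul h5 h4 hfpm0 (by positivity)
    have hcard : (#(Good ×ˢ (Finset.univ : Finset (Fin n))) : ℝ) ≤ 3^n * n := by
      have h1 : #(Good ×ˢ (Finset.univ : Finset (Fin n))) ≤ 3^n * n := by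
        rw [Finset.card_product]
        apply Nat.mul_le_mul
        · calc #Good ≤ #(Finset.univ : Finset (Fin n → Fin 3)) := Finset.card_filter_le _ _
            _ = 3^n := by
              rw [Finset.card_univ]
              simp
        · simp
      calc (#(Good ×ˢ (Finset.univ : Finset (Fin n))) : ℝ) ≤ ((3^n * n : ℕ) : ℝ) := by
            exact_mod_cast h1
        _ = 3^n * n := by push_cast; ring
    calc coinProb t p E ≤ ∑ a ∈ Good ×ˢ Finset.univ, coinProb t p (PE a.1 a.2) :=
          coinProb_le_sum hp _ _ E hincl
      _ ≤ ∑ _a ∈ Good ×ˢ (Finset.univ : Finset (Fin n)), (ε * Λ^n * (f p / c)) :=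
          Finset.sum_le_sum hpair
      _ = (#(Good ×ˢ (Finset.univ : Finset (Fin n))) : ℝ) * (ε * Λ^n * (f p / c)) := by
          rw [Finset.sum_const, nsmul_eq_mul]
      _ ≤ (3^n * n) * (ε * Λ^n * (f p / c)) := by
          apply mul_le_mul_of_nonneg_right hcard (by positivity)
      _ ≤ (7/2) * f p := by
          have hkey : ε * (f p / c) = f p / D := by
            rw [hεdef, div_mul_div_comm, mul_comm D c, mul_div_mul_left (f p) D (ne_of_gt hc)]
          have hexp : (3^n * (n:ℝ)) * (ε * Λ^n * (f p / c)) = (3^n * n * Λ^n) * (f p / D) := by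
            calc (3^n * (n:ℝ)) * (ε * Λ^n * (f p / c))
                = (3^n * n * Λ^n) * (ε * (f p / c)) := by ring
              _ = (3^n * n * Λ^n) * (f p / D) := by rw [hkey]
          rw [hexp, ← mul_div_assoc, div_le_iff₀ hD]
          have hratio : (3:ℝ)^n * n * Λ^n ≤ D := by
            rw [hDdef]
            have e1 : (0:ℝ) ≤ 3^n := by positivity
            have e2 : (0:ℝ) ≤ Λ^n := by positivity
            nlinarith [e1, e2]
          nlinarith [mul_le_mul_of_nonneg_right hratio hfp0, hD]
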